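/- Suppose G > 0, D > 0, and (H, Γ) is a continuous stationary solution, i.e. (GH³/3)H' − (H²/2)σ'(Γ)Γ' = 0 and (GH²/2)ΓH' − (HΓσ'(Γ) − D)Γ' = 0 on ℝ with H ≥ 0 and 0 ≤ Γ < 1 and H not identically 0. Then H·Γ' = 0 on ℝ, and if H > 0 everywhere then both H and Γ are constant. -/
import Mathlib


open Set

/-- Continuous stationary solutions with G, D > 0 satisfy H·Γ' = 0; if H is
everywhere positive, then both H and Γ are constant. -/
theorem stmt_19 (G D : ℝ) (hG : 0 < G) (hD : 0 < D)
    (σ' : ℝ → ℝ) (hσ'neg : ∀ z ∈ Ico (0:ℝ) 1, σ' z < 0)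
    (H Γ H' Γ' : ℝ → ℝ)
    (hHnonneg : ∀ ξ, 0 ≤ H ξ) (hΓrange : ∀ ξ, Γ ξ ∈ Ico (0:ℝ) 1)
    (hHd : ∀ ξ, HasDerivAt H (H' ξ) ξ)
    (hΓd : ∀ ξ, HasDerivAt Γ (Γ' ξ) ξ)
    (hH'cont : Continuous H') (hΓ'cont : Continuous Γ')
    (hHne : ∃ ξ, H ξ ≠ 0)
    (heq1 : ∀ ξ, G * (H ξ)^3 / 3 * H' ξ - (H ξ)^2 / 2 * σ' (Γ ξ) * Γ' ξ = 0)
    (heq2 : ∀ ξ, G * (H ξ)^2 / 2 * Γ ξ * H' ξ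
        - (H ξ * Γ ξ * σ' (Γ ξ) - D) * Γ' ξ = 0) :
    (∀ ξ, H ξ * Γ' ξ = 0) ∧
      ((∀ ξ, 0 < H ξ) →
        ∃ cH cΓ : ℝ, (∀ ξ, H ξ = cH) ∧ ∀ ξ, Γ ξ = cΓ) := by
  have hmain : ∀ ξ, H ξ * Γ' ξ = 0 := by
    intro ξ
    have hs : σ' (Γ ξ) < 0 := hσ'neg _ (hΓrange ξ)
    have hg : 0 ≤ Γ ξ := (hΓrange ξ).1
    have hh : 0 ≤ H ξ := hHnonneg ξ
    have key : H ξ * Γ' ξ * (4 * D - H ξ * Γ ξ * σ' (Γ ξ)) = 0 := by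
      linear_combination 4 * H ξ * heq2 ξ - 6 * Γ ξ * heq1 ξ
    have hpos : 0 < 4 * D - H ξ * Γ ξ * σ' (Γ ξ) := by nlinarith [mul_nonneg hh hg]
    rcases mul_eq_zero.mp key with h | h
    · exact h
    · exact absurd h hpos.ne'
  refine ⟨hmain, fun hHpos => ?_⟩
  have hΓ'0 : ∀ ξ, Γ' ξ = 0 := fun ξ =>
    (mul_eq_zero.mp (hmain ξ)).resolve_left (hHpos ξ).ne'
  have hH'0 : ∀ ξ, H' ξ = 0 := by
    intro ξ
    have h1 := heq1 ξ
    rw [hΓ'0 ξ] at h1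
    have hHp := hHpos ξ
    have hh3 : 0 < G * (H ξ)^3 / 3 := by positivity
    have : G * (H ξ)^3 / 3 * H' ξ = 0 := by linarith
    exact (mul_eq_zero.mp this).resolve_left hh3.ne'
  have hHdiff : Differentiable ℝ H := fun ξ => (hHd ξ).differentiableAt
  have hΓdiff : Differentiable ℝ Γ := fun ξ => (hΓd ξ).differentiableAt
  refine ⟨H 0, Γ 0, fun ξ => ?_, fun ξ => ?_⟩
  · exact is_const_of_deriv_eq_zero hHdiff
      (fun x => by rw [(hHd x).deriv]; exact hH'0 x) ξ 0
  · exact is_const_of_deriv_eq_zero hΓdiff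
      (fun x => by rw [(hΓd x).deriv]; exact hΓ'0 x) ξ 0
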